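/- A real Laurent polynomial f(q) = Σ_{n∈ℤ} a_n q^n can be written as f(q) = (1+q)·φ(q) where φ is a Laurent polynomial with nonnegative real coefficients if and only if for every n ∈ ℤ the alternating tail sum Σ_{i≥0} (−1)^i a_{n+i} is nonnegative. -/

import Mathlib

open LaurentPolynomial
noncomputable def Gt (p : LaurentPolynomial ℝ) (n : ℤ) : ℝ :=
  ∑' i : ℕ, (-1 : ℝ) ^ i * p.coeff (n + (i : ℤ))
lemma Gt_vanish (p : LaurentPolynomial ℝ) (n : ℤ) :
    ∀ i ∉ p.coeff.support.image (fun m => (m - n).toNat), (-1 : ℝ) ^ i * p.coeff (n + (i : ℤ)) = 0 := by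
  intro i hi
  have : p.coeff (n + (i : ℤ)) = 0 := by
    by_contra h
    exact hi (Finset.mem_image.2 ⟨n + i, Finsupp.mem_support_iff.2 h, by simp⟩)
  simp [this]
lemma Gt_summable (p : LaurentPolynomial ℝ) (n : ℤ) :
    Summable (fun i : ℕ => (-1 : ℝ) ^ i * p.coeff (n + (i : ℤ))) :=
  summable_of_ne_finset_zero (Gt_vanish p n)
lemma Gt_rec (p : LaurentPolynomial ℝ) (n : ℤ) : Gt p n = p.coeff n - Gt p (n + 1) := by
  have h := Summable.tsum_eq_zero_add (Gt_summable p n)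
  have h2 : ∀ i : ℕ, (-1:ℝ)^(i+1) * p.coeff (n + ((i+1 : ℕ) : ℤ)) = -((-1:ℝ)^i * p.coeff ((n+1) + (i:ℤ))) := by
    intro i
    have e : n + ((i+1 : ℕ) : ℤ) = (n+1) + i := by push_cast; ring
    rw [e, pow_succ]; ring
  unfold Gt
  rw [h, tsum_congr h2, tsum_neg]
  simp [sub_eq_add_neg]

lemma Gt_add (p q : LaurentPolynomial ℝ) (n : ℤ) : Gt (p + q) n = Gt p n + Gt q n := by
  unfold Gt
  rw [← Summable.tsum_add (Gt_summable p n) (Gt_summable q n)]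
  refine tsum_congr fun i => ?_
  have : (p + q).coeff (n + (i:ℤ)) = p.coeff (n + i) + q.coeff (n + i) := rfl
  rw [this]; ring

lemma T_mul_apply (φ : LaurentPolynomial ℝ) (m : ℤ) : (T 1 * φ : LaurentPolynomial ℝ).coeff m = φ.coeff (m - 1) := by
  have h := AddMonoidAlgebra.coeff_single_mul_apply φ (1 : ℝ) (1 : ℤ) m
  have e : (T 1 : LaurentPolynomial ℝ) = AddMonoidAlgebra.single (1 : ℤ) (1 : ℝ) := rfl
  rw [e, h, one_mul]
  congr 1; ring

lemma Gt_T_mul (φ : LaurentPolynomial ℝ) (n : ℤ) : Gt (T 1 * φ) n = Gt φ (n - 1) := by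
  unfold Gt
  refine tsum_congr fun i => ?_
  rw [T_mul_apply]
  congr 2; ring

/-- a real Laurent polynomial f is divisible by 1 + q with quotient having
nonnegative coefficients iff all the alternating tail sums Σ_{i≥0} (-1)^i a_{n+i} of its
coefficients are nonnegative. -/
theorem laurent_divisible_by_one_add_q_iff (f : LaurentPolynomial ℝ) :
    (∃ φ : LaurentPolynomial ℝ, (∀ n : ℤ, 0 ≤ φ.coeff n) ∧ f = (1 + T 1) * φ) ↔
      ∀ n : ℤ, 0 ≤ ∑' i : ℕ, (-1 : ℝ) ^ i * f.coeff (n + (i : ℤ)) := by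
  constructor
  · rintro ⟨φ, hφ, rfl⟩
    intro n
    have key : Gt ((1 + T 1) * φ) n = φ.coeff (n - 1) := by
      rw [add_mul, one_mul, Gt_add, Gt_T_mul]
      have h := Gt_rec φ (n - 1)
      rw [sub_add_cancel] at h
      rw [h]; ring
    calc (0:ℝ) ≤ φ.coeff (n - 1) := hφ _
      _ = Gt ((1 + T 1) * φ) n := key.symm
      _ = _ := rfl
  · intro hg
    have hg' : ∀ n : ℤ, 0 ≤ Gt f n := hg
    have key : ∀ n : ℤ, f.coeff n = 0 → Gt f n = 0 := by
      intro n hn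
      have h1 := Gt_rec f n
      rw [hn, zero_sub] at h1
      have h2 := hg' n
      have h3 := hg' (n + 1)
      linarith
    have hsupp : ∀ n : ℤ, Gt f (n + 1) ≠ 0 → n ∈ f.coeff.support.image (fun m => m - 1) := by
      intro n hne
      refine Finset.mem_image.2 ⟨n + 1, Finsupp.mem_support_iff.2 ?_, by ring⟩
      intro h0
      exact hne (key (n + 1) h0)
    obtain ⟨φ, hφdef⟩ : ∃ φ : LaurentPolynomial ℝ, ∀ n : ℤ, φ.coeff n = Gt f (n + 1) :=
      ⟨AddMonoidAlgebra.ofCoeff (Finsupp.onFinset (f.coeff.support.image (fun m => m - 1)) (fun n => Gt f (n + 1)) hsupp),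
        fun n => rfl⟩
    refine ⟨φ, fun n => (hφdef n) ▸ hg' (n + 1), ?_⟩
    apply LaurentPolynomial.ext
    intro m
    have hmul : ((1 + T 1) * φ : LaurentPolynomial ℝ).coeff m = φ.coeff m + φ.coeff (m - 1) := by
      rw [add_mul, one_mul]
      have : ∀ (a b : LaurentPolynomial ℝ), (a + b).coeff m = a.coeff m + b.coeff m := fun a b => rfl
      rw [this, T_mul_apply]
    rw [hmul, hφdef, hφdef, sub_add_cancel]
    have h := Gt_rec f m
    linarith
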